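/- Let A_1,...,A_k be n×n real matrices and p ∈ Δ_k. If there exists a symmetric positive definite matrix P such that Σ_{i=1}^k p_i Aᵢᵀ P Aᵢ − P is negative definite, then for every x₀ ∈ ℝⁿ, the sequence of expected second moments M_t := E[x_t x_tᵀ] of the system x_{t+1} = A(w_t) x_t with i.i.d. w_t ~ p and x_0 = x₀ converges to 0; equivalently, M_{t+1} = Σ_i p_i A_i M_t A_iᵀ with M_0 = x₀x₀ᵀ satisfies M_t → 0. -/

import Mathlib

open Finset Matrix

section LyapAux
variable {n : ℕ}

private lemma quadss (Mm : Matrix (Fin n) (Fin n) ℝ) (i j : Fin n) :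
    Pi.single i (1:ℝ) ⬝ᵥ (Mm *ᵥ Pi.single j 1) = Mm i j := by
  simp [single_dotProduct, mulVec_single]

private lemma diagnn {Mm : Matrix (Fin n) (Fin n) ℝ} (h : Mm.PosSemidef) (i : Fin n) :
    0 ≤ Mm i i := by
  have := h.dotProduct_mulVec_nonneg (Pi.single i 1)
  simpa [quadss] using this

private lemma trnn {Mm : Matrix (Fin n) (Fin n) ℝ} (h : Mm.PosSemidef) : 0 ≤ Mm.trace :=
  Finset.sum_nonneg fun i _ => diagnn h i

private lemma trmulnn {A B : Matrix (Fin n) (Fin n) ℝ} (hA : A.PosSemidef)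
    (hB : B.PosSemidef) : 0 ≤ (A * B).trace := by
  obtain ⟨C, rfl⟩ : ∃ C : Matrix (Fin n) (Fin n) ℝ, B = Cᴴ * C := by
    open scoped MatrixOrder in
    obtain ⟨C, hC⟩ := CStarAlgebra.nonneg_iff_eq_star_mul_self.mp hB.nonneg
    exact ⟨C, hC⟩
  have h : (C * A * Cᴴ).PosSemidef := hA.mul_mul_conjTranspose_same C
  have e : (A * (Cᴴ * C)).trace = (C * A * Cᴴ).trace := by
    rw [← Matrix.mul_assoc, Matrix.trace_mul_comm]
    simp [Matrix.mul_assoc]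
  rw [e]; exact trnn h

private lemma diag_le_trace {Mm : Matrix (Fin n) (Fin n) ℝ} (h : Mm.PosSemidef) (i : Fin n) :
    Mm i i ≤ Mm.trace :=
  Finset.single_le_sum (fun j _ => diagnn h j) (Finset.mem_univ i)

private lemma entry_abs_le_trace {Mm : Matrix (Fin n) (Fin n) ℝ} (h : Mm.PosSemidef)
    (i j : Fin n) : |Mm i j| ≤ Mm.trace := by
  have hsym : Mm j i = Mm i j := by
    have := congrFun (congrFun h.1.eq i) j
    simpa [conjTranspose_apply] using this
  have hplus := h.dotProduct_mulVec_nonneg (Pi.single i (1:ℝ) + Pi.single j 1)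
  have hminus := h.dotProduct_mulVec_nonneg (Pi.single i (1:ℝ) - Pi.single j 1)
  rw [star_trivial] at hplus hminus
  simp only [add_dotProduct, dotProduct_add, sub_dotProduct, dotProduct_sub,
    mulVec_add, mulVec_sub, quadss] at hplus hminus
  have hii := diag_le_trace h i
  have hjj := diag_le_trace h j
  rw [abs_le]
  constructor <;> linarith [hsym]

private lemma exists_smul_le {Q P : Matrix (Fin n) (Fin n) ℝ} (hQ : Q.PosDef)
    (hP : P.PosSemidef) : ∃ c : ℝ, 0 < c ∧ (Q - c • P).PosSemidef := by
  have herm : ∀ c : ℝ, (Q - c • P).IsHermitian := fun c => by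
    simp only [Matrix.IsHermitian, conjTranspose_sub, conjTranspose_smul, star_trivial,
      hQ.1.eq, hP.1.eq]
  rcases Nat.eq_zero_or_pos n with hn | hn
  · subst hn
    refine ⟨1, one_pos, PosSemidef.of_dotProduct_mulVec_nonneg (herm 1) fun x => ?_⟩
    simp [dotProduct]
  · have hf : Continuous fun x : Fin n → ℝ => x ⬝ᵥ Q *ᵥ x := by
      simp only [dotProduct, mulVec]
      exact continuous_finset_sum _ fun i _ =>
        (continuous_apply i).mul (continuous_finset_sum _ fun j _ =>
          continuous_const.mul (continuous_apply j))
    have hg : Continuous fun x : Fin n → ℝ => x ⬝ᵥ P *ᵥ x := by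
      simp only [dotProduct, mulVec]
      exact continuous_finset_sum _ fun i _ =>
        (continuous_apply i).mul (continuous_finset_sum _ fun j _ =>
          continuous_const.mul (continuous_apply j))
    have hne : (Metric.sphere (0 : Fin n → ℝ) 1).Nonempty := by
      haveI : Nontrivial (Fin n → ℝ) :=
        ⟨fun _ => 0, fun _ => 1, fun h => by simpa using congrFun h ⟨0, hn⟩⟩
      exact NormedSpace.sphere_nonempty.mpr zero_le_one
    obtain ⟨u, huS, humin⟩ :=
      (isCompact_sphere (0 : Fin n → ℝ) 1).exists_isMinOn hne hf.continuousOn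
    obtain ⟨v, hvS, hvmax⟩ :=
      (isCompact_sphere (0 : Fin n → ℝ) 1).exists_isMaxOn hne hg.continuousOn
    have hu0 : u ≠ 0 := by
      intro h
      have : ‖u‖ = 1 := mem_sphere_zero_iff_norm.mp huS
      rw [h] at this; simpa using this
    set ε := u ⬝ᵥ Q *ᵥ u with hεdef
    have hε : 0 < ε := by have := hQ.dotProduct_mulVec_pos hu0; simp only [star_trivial] at this; exact this
    set b := v ⬝ᵥ P *ᵥ v with hbdef
    have hb : 0 ≤ b := by simpa using hP.dotProduct_mulVec_nonneg v
    refine ⟨ε / (b + 1), div_pos hε (by linarith), PosSemidef.of_dotProduct_mulVec_nonneg (herm _) fun x => ?_⟩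
    have key : (ε / (b + 1)) * (x ⬝ᵥ P *ᵥ x) ≤ x ⬝ᵥ Q *ᵥ x := by
      rcases eq_or_ne x 0 with rfl | hx
      · simp
      · have ha : 0 < ‖x‖ := norm_pos_iff.mpr hx
        set y := ‖x‖⁻¹ • x with hydef
        have hy : ‖y‖ = 1 := norm_smul_inv_norm hx
        have hyS : y ∈ Metric.sphere (0 : Fin n → ℝ) 1 := mem_sphere_zero_iff_norm.mpr hy
        have hxy : x = ‖x‖ • y := by
          rw [hydef, smul_smul, mul_inv_cancel₀ ha.ne', one_smul]
        have hscale : ∀ (R : Matrix (Fin n) (Fin n) ℝ) (z : Fin n → ℝ) (t : ℝ),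
            (t • z) ⬝ᵥ R *ᵥ (t • z) = t ^ 2 * (z ⬝ᵥ R *ᵥ z) := by
          intro R z t
          rw [smul_dotProduct, mulVec_smul, dotProduct_smul, smul_eq_mul, smul_eq_mul]
          ring
        have eP : x ⬝ᵥ P *ᵥ x = ‖x‖ ^ 2 * (y ⬝ᵥ P *ᵥ y) := by
          conv_lhs => rw [hxy]
          exact hscale P y ‖x‖
        have eQ : x ⬝ᵥ Q *ᵥ x = ‖x‖ ^ 2 * (y ⬝ᵥ Q *ᵥ y) := by
          conv_lhs => rw [hxy]
          exact hscale Q y ‖x‖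
        rw [eP, eQ]
        have h1 : ε ≤ y ⬝ᵥ Q *ᵥ y := humin hyS
        have h2 : y ⬝ᵥ P *ᵥ y ≤ b := hvmax hyS
        have h3 : 0 ≤ y ⬝ᵥ P *ᵥ y := by simpa using hP.dotProduct_mulVec_nonneg y
        have hcy : (ε / (b + 1)) * (y ⬝ᵥ P *ᵥ y) ≤ ε := by
          have hle : (ε / (b + 1)) * (y ⬝ᵥ P *ᵥ y) ≤ (ε / (b + 1)) * b :=
            mul_le_mul_of_nonneg_left h2 (div_pos hε (by linarith)).le
          have hb1 : ε / (b + 1) * b ≤ ε := by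
            rw [div_mul_eq_mul_div, div_le_iff₀ (by linarith : (0:ℝ) < b + 1)]
            nlinarith
          linarith
        calc (ε / (b + 1)) * (‖x‖ ^ 2 * (y ⬝ᵥ P *ᵥ y))
            = ‖x‖ ^ 2 * ((ε / (b + 1)) * (y ⬝ᵥ P *ᵥ y)) := by ring
          _ ≤ ‖x‖ ^ 2 * (y ⬝ᵥ Q *ᵥ y) :=
              mul_le_mul_of_nonneg_left (hcy.trans h1) (sq_nonneg _)
    have hexp : star x ⬝ᵥ (Q - (ε / (b + 1)) • P) *ᵥ x
        = x ⬝ᵥ Q *ᵥ x - (ε / (b + 1)) * (x ⬝ᵥ P *ᵥ x) := by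
      simp [sub_mulVec, dotProduct_sub, smul_mulVec, dotProduct_smul, smul_eq_mul]
    rw [hexp]
    linarith

private lemma psd_sum {ι : Type*} (s : Finset ι) (f : ι → Matrix (Fin n) (Fin n) ℝ)
    (h : ∀ i ∈ s, (f i).PosSemidef) : (∑ i ∈ s, f i).PosSemidef :=
  Finset.sum_induction f _ (fun _ _ ha hb => ha.add hb) Matrix.PosSemidef.zero h

private lemma psd_smul {c : ℝ} {Mm : Matrix (Fin n) (Fin n) ℝ} (hc : 0 ≤ c)
    (h : Mm.PosSemidef) : (c • Mm).PosSemidef := by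
  refine PosSemidef.of_dotProduct_mulVec_nonneg ?_ fun x => ?_
  · simp only [Matrix.IsHermitian, conjTranspose_smul, star_trivial, h.1.eq]
  · rw [smul_mulVec, dotProduct_smul, smul_eq_mul]
    exact mul_nonneg hc (h.dotProduct_mulVec_nonneg x)

private lemma trace_comparison {Q P : Matrix (Fin n) (Fin n) ℝ} {c : ℝ}
    (hsub : (Q - c • P).PosSemidef) {Mm : Matrix (Fin n) (Fin n) ℝ} (hM : Mm.PosSemidef) :
    c * (P * Mm).trace ≤ (Q * Mm).trace := by
  have h := trmulnn hsub hM
  rw [Matrix.sub_mul, Matrix.smul_mul, trace_sub, trace_smul, smul_eq_mul] at h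
  linarith

end LyapAux

/-- the Lyapunov condition Σ pᵢ Aᵢᵀ P Aᵢ − P ≺ 0 with P ≻ 0 implies the
second-moment recursion M_{t+1} = Σᵢ pᵢ Aᵢ M_t Aᵢᵀ with M₀ = x₀x₀ᵀ converges to 0. -/
theorem lyapunov_implies_second_moment_stability (n k : ℕ)
    (A : Fin k → Matrix (Fin n) (Fin n) ℝ) (p : Fin k → ℝ)
    (hp : (∀ i, 0 ≤ p i) ∧ ∑ i, p i = 1)
    (P : Matrix (Fin n) (Fin n) ℝ) (hP : P.PosDef)
    (hLyap : (P - ∑ i, p i • ((A i)ᵀ * P * A i)).PosDef) :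
    ∀ (x₀ : Fin n → ℝ) (M : ℕ → Matrix (Fin n) (Fin n) ℝ),
      M 0 = Matrix.vecMulVec x₀ x₀ →
      (∀ t, M (t + 1) = ∑ i, p i • (A i * M t * (A i)ᵀ)) →
      Filter.Tendsto M Filter.atTop (nhds 0) := by
  intro x₀ M hM0 hrec
  have hT : ∀ (B : Matrix (Fin n) (Fin n) ℝ), Bᵀ = Bᴴ := fun B => by
    ext i j; simp [conjTranspose_apply]
  -- every M t is PSD
  have hPsd : ∀ t, (M t).PosSemidef := by
    intro t
    induction t with
    | zero =>
      rw [hM0]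
      refine PosSemidef.of_dotProduct_mulVec_nonneg ?_ fun y => ?_
      · ext a c
        simp [Matrix.IsHermitian, conjTranspose_apply, vecMulVec_apply, mul_comm]
      · have hmv : vecMulVec x₀ x₀ *ᵥ y = (x₀ ⬝ᵥ y) • x₀ := by
          ext a
          simp only [vecMulVec_apply, mulVec, dotProduct, Pi.smul_apply, smul_eq_mul,
            Finset.sum_mul]
          exact Finset.sum_congr rfl fun x _ => by ring
        rw [star_trivial, hmv, dotProduct_smul, smul_eq_mul, dotProduct_comm]
        exact mul_self_nonneg _
    | succ t ih =>
      rw [hrec t]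
      refine psd_sum _ _ fun i _ => psd_smul (hp.1 i) ?_
      rw [hT]
      exact ih.mul_mul_conjTranspose_same (A i)
  set S : Matrix (Fin n) (Fin n) ℝ := ∑ i, p i • ((A i)ᵀ * P * A i) with hS
  -- trace recursion
  have hkey : ∀ t, (P * M (t + 1)).trace = (S * M t).trace := by
    intro t
    rw [hrec t, Finset.mul_sum, hS, Finset.sum_mul, trace_sum, trace_sum]
    refine Finset.sum_congr rfl fun i _ => ?_
    rw [Matrix.mul_smul, Matrix.smul_mul, trace_smul, trace_smul]
    congr 1
    have e1 : P * (A i * M t * (A i)ᵀ) = (P * (A i * M t)) * (A i)ᵀ := by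
      simp only [Matrix.mul_assoc]
    rw [e1, Matrix.trace_mul_comm]
    simp only [Matrix.mul_assoc]
  -- comparison constants
  obtain ⟨c, hc, hQc⟩ := exists_smul_le hLyap hP.posSemidef
  obtain ⟨a, ha, hPa⟩ := exists_smul_le hP (Matrix.PosSemidef.one (n := Fin n))
  -- the trace of P * M t decays geometrically
  set r : ℝ := max (1 - c) 0 with hr
  have hr0 : 0 ≤ r := le_max_right _ _
  have hr1 : r < 1 := by
    rw [hr, max_lt_iff]
    constructor <;> linarith
  have htrPM_nonneg : ∀ t, 0 ≤ (P * M t).trace := fun t =>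
    trmulnn hP.posSemidef (hPsd t)
  have hstep : ∀ t, (P * M (t + 1)).trace ≤ r * (P * M t).trace := by
    intro t
    have hcomp := trace_comparison hQc (hPsd t)
    have hexpand : ((P - ∑ i, p i • ((A i)ᵀ * P * A i)) * M t).trace
        = (P * M t).trace - (S * M t).trace := by
      rw [← hS, Matrix.sub_mul, trace_sub]
    rw [hexpand] at hcomp
    have h1 : (S * M t).trace ≤ (1 - c) * (P * M t).trace := by nlinarith [htrPM_nonneg t]
    have h2 : (1 - c) * (P * M t).trace ≤ r * (P * M t).trace :=
      mul_le_mul_of_nonneg_right (le_max_left _ _) (htrPM_nonneg t)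
    rw [hkey t]
    linarith
  have hgeo : ∀ t, (P * M t).trace ≤ r ^ t * (P * M 0).trace := by
    intro t
    induction t with
    | zero => simp
    | succ t ih =>
      calc (P * M (t + 1)).trace ≤ r * (P * M t).trace := hstep t
        _ ≤ r * (r ^ t * (P * M 0).trace) := mul_le_mul_of_nonneg_left ih hr0
        _ = r ^ (t + 1) * (P * M 0).trace := by ring
  have htrPM : Filter.Tendsto (fun t => (P * M t).trace) Filter.atTop (nhds 0) := by
    have hpow : Filter.Tendsto (fun t : ℕ => r ^ t * (P * M 0).trace) Filter.atTop (nhds 0) := by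
      have := (tendsto_pow_atTop_nhds_zero_of_lt_one hr0 hr1).mul_const ((P * M 0).trace)
      simpa using this
    exact squeeze_zero htrPM_nonneg hgeo hpow
  -- trace of M t tends to 0
  have htrM_le : ∀ t, (M t).trace ≤ a⁻¹ * (P * M t).trace := by
    intro t
    have := trace_comparison hPa (hPsd t)
    rw [Matrix.one_mul] at this
    rw [le_inv_mul_iff₀ ha]
    linarith
  have htrM : Filter.Tendsto (fun t => (M t).trace) Filter.atTop (nhds 0) := by
    have hbnd : Filter.Tendsto (fun t => a⁻¹ * (P * M t).trace) Filter.atTop (nhds 0) := by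
      have := htrPM.const_mul a⁻¹
      simpa using this
    exact squeeze_zero (fun t => trnn (hPsd t)) htrM_le hbnd
  -- entrywise convergence
  refine tendsto_pi_nhds.mpr fun i => tendsto_pi_nhds.mpr fun j => ?_
  have hzero : (0 : Matrix (Fin n) (Fin n) ℝ) i j = 0 := rfl
  rw [hzero]
  exact squeeze_zero_norm (fun t => by
    rw [Real.norm_eq_abs]; exact entry_abs_le_trace (hPsd t) i j) htrM
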